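/- Let G be a DAG and G_M its moral graph. Then G_M is acyclic (a forest) if and only if G_M is bipartite. -/

import Mathlib

open SimpleGraph Walk

section Aux

variable {V : Type*} {G : SimpleGraph V}

/-- A path from a vertex to itself is nil. -/
lemma aux_path_loop_nil {x : V} (p : G.Walk x x) (hp : p.IsPath) : p = Walk.nil := by
  cases p with
  | nil => rfl
  | cons h q =>
    exfalso
    have := hp.support_nodup
    rw [Walk.support_cons] at this
    exact (List.nodup_cons.mp this).1 q.end_mem_support

lemma aux_getVert_one_ne_end {a b : V} (p : G.Walk a b) (hp : p.IsPath)
    (hl : 2 ≤ p.length) : p.getVert 1 ≠ b := by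
  cases p with
  | nil => simp at hl
  | cons h q =>
    rw [show (Walk.cons h q).getVert 1 = q.getVert 0 from Walk.getVert_cons_succ q h, Walk.getVert_zero]
    intro hEq
    subst hEq
    have : q = Walk.nil := aux_path_loop_nil q hp.of_cons
    subst this
    simp at hl

lemma aux_forest_colorable (hac : G.IsAcyclic) : G.Colorable 2 := by
  classical
  -- root of the component of v
  set root : V → V := fun v => (G.connectedComponentMk v).out with hroot
  have hreach : ∀ v, G.Reachable v (root v) := by
    intro v
    have : G.connectedComponentMk (root v) = G.connectedComponentMk v :=
      Quot.out_eq _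
    exact (ConnectedComponent.eq.mp this).symm
  -- canonical path to root
  set pth : ∀ v, G.Path v (root v) := fun v => (hreach v).some.toPath with hpth
  -- key parity lemma
  have key : ∀ {v w r : V}, G.Adj v w → ∀ (p : G.Walk v r) (q : G.Walk w r),
      p.IsPath → q.IsPath → p.length = q.length + 1 ∨ q.length = p.length + 1 := by
    intro v w r h p q hp hq
    by_cases hw : w ∈ p.support
    · left
      have hq' : (p.dropUntil w hw).IsPath := hp.dropUntil hw
      have ht : (p.takeUntil w hw).IsPath := hp.takeUntil hw
      have h1 : (⟨q, hq⟩ : G.Path w r) = ⟨p.dropUntil w hw, hq'⟩ :=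
        hac.path_unique _ _
      have h2 : (⟨p.takeUntil w hw, ht⟩ : G.Path v w) = Path.singleton h :=
        hac.path_unique _ _
      have hqlen : q.length = (p.dropUntil w hw).length := by
        have := congrArg (fun x : G.Path w r => (x : G.Walk w r).length) h1
        simpa using this
      have htlen : (p.takeUntil w hw).length = 1 := by
        have := congrArg (fun x : G.Path v w => (x : G.Walk v w).length) h2
        simpa [Path.singleton] using this
      have := congrArg Walk.length (p.take_spec hw)
      rw [Walk.length_append, htlen, ← hqlen] at this
      omega
    · right
      have hq' : (Walk.cons h.symm p).IsPath := hp.cons hw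
      have h1 : (⟨q, hq⟩ : G.Path w r) = ⟨Walk.cons h.symm p, hq'⟩ :=
        hac.path_unique _ _
      have : q.length = (Walk.cons h.symm p).length := by
        have := congrArg (fun x : G.Path w r => (x : G.Walk w r).length) h1
        simpa using this
      simpa using this
  refine ⟨Coloring.mk (fun v => ⟨((pth v : G.Walk v (root v)).length) % 2, by omega⟩) ?_⟩
  intro v w h hEq
  have hcomp : G.connectedComponentMk v = G.connectedComponentMk w :=
    ConnectedComponent.eq.mpr h.reachable
  have hr : root w = root v := by rw [hroot]; simp [hcomp]
  -- transport q to end at root v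
  set q : G.Walk w (root v) := (pth w : G.Walk w (root w)).copy rfl hr with hqdef
  have hq : q.IsPath := by
    rw [hqdef, Walk.isPath_copy]
    exact (pth w).2
  have hlen : q.length = (pth w : G.Walk w (root w)).length := by
    rw [hqdef, Walk.length_copy]
  have := key h (pth v : G.Walk v (root v)) q (pth v).2 hq
  simp only [Fin.mk.injEq] at hEq
  omega

end Aux

section Main

variable {V : Type*} {R : V → V → Prop}

/-- The orientation pattern lemma: in a graph where every edge is `R`-oriented
and parents are unique, every nonempty path is all-forward, all-backward, or
backward-then-forward. -/
lemma aux_pattern {GM : SimpleGraph V}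
    (H1 : ∀ a b, GM.Adj a b → R a b ∨ R b a)
    (H2 : ∀ x z y, R x y → R z y → x = z) :
    ∀ {a b : V} (p : GM.Walk a b), p.IsPath → ¬ p.Nil →
      (Relation.TransGen R a b ∧ R (p.getVert (p.length - 1)) b)
      ∨ (Relation.TransGen R b a ∧ R (p.getVert 1) a)
      ∨ (R (p.getVert 1) a ∧ R (p.getVert (p.length - 1)) b) := by
  intro a b p
  induction p with
  | nil => intro _ hne; exact absurd Walk.Nil.nil hne
  | @cons a a₁ b h' q' ih =>
    intro hp _
    by_cases hqnil : q'.Nil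
    · have hb : a₁ = b := hqnil.eq
      subst hb
      have hq0 : q'.length = 0 := Walk.nil_iff_length_eq.mp hqnil
      have hgv1 : (Walk.cons h' q').getVert 1 = a₁ := (Walk.getVert_cons_succ q' h').trans (Walk.getVert_zero _)
      have hgv0 : (Walk.cons h' q').getVert ((Walk.cons h' q').length - 1) = a := by
        rw [Walk.length_cons, hq0]
        exact Walk.getVert_zero _
      rcases H1 a a₁ h' with hF | hB
      · exact Or.inl ⟨Relation.TransGen.single hF, by rwa [hgv0]⟩
      · exact Or.inr (Or.inl ⟨Relation.TransGen.single hB, by rwa [hgv1]⟩)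
    · have hq'path : q'.IsPath := hp.of_cons
      have hnotmem : a ∉ q'.support := by
        have := hp.support_nodup
        rw [Walk.support_cons] at this
        exact (List.nodup_cons.mp this).1
      have hlen : q'.length ≠ 0 := fun h0 => hqnil (Walk.nil_iff_length_eq.mpr h0)
      have hmem1 : q'.getVert 1 ∈ q'.support :=
        Walk.mem_support_iff_exists_getVert.mpr ⟨1, rfl, by omega⟩
      have hgv1 : (Walk.cons h' q').getVert 1 = a₁ := (Walk.getVert_cons_succ q' h').trans (Walk.getVert_zero _)
      have hgvlast : (Walk.cons h' q').getVert ((Walk.cons h' q').length - 1)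
          = q'.getVert (q'.length - 1) := by
        have h1 : q'.length - 1 + 1 = q'.length := by omega
        have h2 := Walk.getVert_cons_succ (n := q'.length - 1) q' h'
        rw [h1] at h2
        rw [Walk.length_cons, Nat.add_sub_cancel]
        exact h2
      rcases H1 a a₁ h' with hF | hB
      · rcases ih hq'path hqnil with ⟨hT, hL⟩ | ⟨_, hfrst⟩ | ⟨hfrst, _⟩
        · exact Or.inl ⟨Relation.TransGen.head hF hT, by rwa [hgvlast]⟩
        · exact absurd ((H2 _ _ _ hfrst hF) ▸ hmem1) hnotmem
        · exact absurd ((H2 _ _ _ hfrst hF) ▸ hmem1) hnotmem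
      · rcases ih hq'path hqnil with ⟨_, hL⟩ | ⟨hT, _⟩ | ⟨_, hL⟩
        · exact Or.inr (Or.inr ⟨by rwa [hgv1], by rwa [hgvlast]⟩)
        · exact Or.inr (Or.inl ⟨hT.tail hB, by rwa [hgv1]⟩)
        · exact Or.inr (Or.inr ⟨by rwa [hgv1], by rwa [hgvlast]⟩)

end Main

/-- For a DAG `G` with moral graph `G_M`, `G_M` is a forest iff `G_M` is
bipartite (i.e., 2-colorable). -/
theorem stmt_11 (n : ℕ) (R : Fin n → Fin n → Prop)
    (hacyclic : ∀ i, ¬ Relation.TransGen R i i)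
    (GM : SimpleGraph (Fin n))
    (hGM : GM = SimpleGraph.fromRel fun i j => R i j ∨ ∃ k, R i k ∧ R j k) :
    GM.IsAcyclic ↔ GM.Colorable 2 := by
  constructor
  · exact aux_forest_colorable
  · intro hcol
    intro v c hc
    -- no triangles
    have hcf : GM.CliqueFree 3 := hcol.cliqueFree (by norm_num)
    have hirr : ∀ x, ¬ R x x := fun x hx => hacyclic x (Relation.TransGen.single hx)
    have htri : ∀ x y z : Fin n, GM.Adj x y → GM.Adj x z → GM.Adj y z → False := by
      intro x y z h1 h2 h3
      exact hcf {x, y, z} (SimpleGraph.is3Clique_triple_iff.mpr ⟨h1, h2, h3⟩)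
    have hadj : ∀ x y : Fin n, GM.Adj x y ↔
        x ≠ y ∧ ((R x y ∨ ∃ k, R x k ∧ R y k) ∨ (R y x ∨ ∃ k, R y k ∧ R x k)) := by
      intro x y; rw [hGM]; exact SimpleGraph.fromRel_adj _ x y
    -- every edge is R-oriented
    have H1 : ∀ a b, GM.Adj a b → R a b ∨ R b a := by
      intro a b hab
      obtain ⟨hne, hrel⟩ := (hadj a b).mp hab
      have common : ∀ k, R a k → R b k → R a b ∨ R b a := by
        intro k hak hbk
        by_cases hka : k = a
        · exact Or.inr (hka ▸ hbk)
        by_cases hkb : k = b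
        · exact Or.inl (hkb ▸ hak)
        · exfalso
          have h2 : GM.Adj a k := (hadj a k).mpr ⟨Ne.symm hka, Or.inl (Or.inl hak)⟩
          have h3 : GM.Adj b k := (hadj b k).mpr ⟨Ne.symm hkb, Or.inl (Or.inl hbk)⟩
          exact htri a b k hab h2 h3
      rcases hrel with (h | ⟨k, hak, hbk⟩) | (h | ⟨k, hbk, hak⟩)
      · exact Or.inl h
      · exact common k hak hbk
      · exact Or.inr h
      · exact common k hak hbk
    -- unique parents
    have H2 : ∀ x z y : Fin n, R x y → R z y → x = z := by
      intro x z y hxy hzy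
      by_contra hne
      have hxny : x ≠ y := fun h => hirr y (h ▸ hxy)
      have hzny : z ≠ y := fun h => hirr y (h ▸ hzy)
      have h1 : GM.Adj x z := (hadj x z).mpr ⟨hne, Or.inl (Or.inr ⟨y, hxy, hzy⟩)⟩
      have h2 : GM.Adj x y := (hadj x y).mpr ⟨hxny, Or.inl (Or.inl hxy)⟩
      have h3 : GM.Adj z y := (hadj z y).mpr ⟨hzny, Or.inl (Or.inl hzy)⟩
      exact htri x z y h1 h2 h3
    -- destructure the cycle
    cases c with
    | nil => exact hc.ne_nil rfl
    | @cons _ w _ h p =>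
      have hlen3 : 3 ≤ (Walk.cons h p).length := hc.three_le_length
      have hplen : 2 ≤ p.length := by
        rw [Walk.length_cons] at hlen3; omega
      have hppath : p.IsPath := ((SimpleGraph.Walk.cons_isCycle_iff p h).mp hc).1
      have hpne : ¬ p.Nil := by
        intro hnil
        rw [Walk.nil_iff_length_eq.mp hnil] at hplen; omega
      -- the two distinctness facts
      have hw1 : p.getVert 1 ≠ v := aux_getVert_one_ne_end p hppath hplen
      have hv1 : p.getVert (p.length - 1) ≠ w := by
        have h2 : 2 ≤ p.reverse.length := by rwa [Walk.length_reverse]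
        have := aux_getVert_one_ne_end p.reverse hppath.reverse h2
        rwa [Walk.getVert_reverse] at this
      rcases H1 v w h with hvw | hwv
      · rcases aux_pattern H1 H2 p hppath hpne with ⟨hT, _⟩ | ⟨_, hfrst⟩ | ⟨hfrst, _⟩
        · exact hacyclic v (Relation.TransGen.head hvw hT)
        · exact hw1 (H2 _ _ _ hfrst hvw)
        · exact hw1 (H2 _ _ _ hfrst hvw)
      · rcases aux_pattern H1 H2 p hppath hpne with ⟨_, hL⟩ | ⟨hT, _⟩ | ⟨_, hL⟩
        · exact hv1 (H2 _ _ _ hL hwv)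
        · exact hacyclic v (hT.tail hwv)
        · exact hv1 (H2 _ _ _ hL hwv)
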